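/- With the grouped Macaulay expansion data k_0 > k_1 > ... > k_r ≥ 0, j_0 > j_1 > ... > j_r ≥ 1, i_n ≥ 0, j_n - i_n ≥ 1, and j_{n+1} = j_n - i_n - 1: for each s with 0 ≤ s ≤ r-1, C(j_s - i_s + k_s, j_s - i_s - 1) ≥ Σ_{n=s+1}^{r} C(j_n + k_n + 1, j_n) - Σ_{n=s+1}^{r} C(j_n - i_n + k_n, j_n - i_n - 1). -/

import Mathlib

/-- With the grouped Macaulay expansion data `k 0 > ⋯ > k r ≥ 0`,
`j 0 > ⋯ > j r ≥ 1`, `i n ≥ 0`, `j n - i n ≥ 1`, `j (n+1) = j n - i n - 1`: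
for each `0 ≤ s ≤ r - 1`,
`C(js - is + ks, js - is - 1) ≥ Σ_{n=s+1}^{r} C(jn + kn + 1, jn) - Σ_{n=s+1}^{r} C(jn - in + kn, jn - in - 1)`. -/
theorem stmt_10 (r s : ℕ) (k j i : ℕ → ℕ)
    (hk : ∀ n, n < r → k (n + 1) < k n)
    (hji : ∀ n, n ≤ r → i n + 1 ≤ j n)
    (hjr : 1 ≤ j r)
    (hjsucc : ∀ n, n < r → j (n + 1) + i n + 1 = j n)
    (hs : s + 1 ≤ r) :
    (∑ n ∈ Finset.Icc (s + 1) r, (Nat.choose (j n + k n + 1) (j n) : ℤ)) -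
        ∑ n ∈ Finset.Icc (s + 1) r,
          (Nat.choose (j n - i n + k n) (j n - i n - 1) : ℤ) ≤
      (Nat.choose (j s - i s + k s) (j s - i s - 1) : ℤ) := by
  have key : ∀ n, n < r →
      (Nat.choose (j (n+1) + k (n+1) + 1) (j (n+1)) : ℤ)
        ≤ Nat.choose (j n - i n + k n) (j n - i n - 1) := by
    intro n hn
    have h1 : j n - i n = j (n + 1) + 1 := by
      have := hjsucc n hn; omega
    rw [h1]
    simp only [Nat.add_sub_cancel]
    exact_mod_cast Nat.choose_le_choose (j (n+1)) (by have := hk n hn; omega)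
  clear hk hji hjr hjsucc
  suffices H : ∀ d s, s + 1 + d = r →
      (∑ n ∈ Finset.Icc (s + 1) r, (Nat.choose (j n + k n + 1) (j n) : ℤ)) -
        ∑ n ∈ Finset.Icc (s + 1) r,
          (Nat.choose (j n - i n + k n) (j n - i n - 1) : ℤ) ≤
      (Nat.choose (j s - i s + k s) (j s - i s - 1) : ℤ) by
    exact H (r - (s+1)) s (by omega)
  intro d
  induction d with
  | zero =>
    intro s hs'
    have hr : s + 1 = r := by omega
    subst hr
    rw [Finset.Icc_self, Finset.sum_singleton, Finset.sum_singleton]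
    have h1 := key s (by omega)
    have h2 : (0:ℤ) ≤
        Nat.choose (j (s+1) - i (s+1) + k (s+1)) (j (s+1) - i (s+1) - 1) := by
      positivity
    linarith
  | succ d ih =>
    intro s hs'
    have hsr : s + 1 < r := by omega
    have hset : Finset.Icc (s+1) r = insert (s+1) (Finset.Icc (s+2) r) := by
      ext x; simp only [Finset.mem_Icc, Finset.mem_insert]; omega
    rw [hset, Finset.sum_insert (by simp), Finset.sum_insert (by simp)]
    have h1 := ih (s+1) (by omega)
    have h2 := key s (by omega)
    have h3 : s + 1 + 1 = s + 2 := rfl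
    rw [h3] at h1
    linarith
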